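/- For all integers n ≥ 1 and 1 ≤ k ≤ n, the number of permutation tableaux of length n with exactly k rows equals the number of permutations π of [n] with exactly k weak excedances. -/

import Mathlib

/-- `P` is a linked partition of `[n] = {1,…,n}`: a collection of nonempty
subsets of `[n]` whose union is `[n]`, any two distinct blocks being nearly
disjoint. -/
def IsLinkedPartition (n : ℕ) (P : Finset (Finset ℕ)) : Prop :=
  (∀ B ∈ P, B.Nonempty ∧ B ⊆ Finset.Icc 1 n) ∧
  (∀ x ∈ Finset.Icc 1 n, ∃ B ∈ P, x ∈ B) ∧
  (∀ B ∈ P, ∀ C ∈ P, B ≠ C → ∀ x ∈ B ∩ C,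
    ((∀ y ∈ B, x ≤ y) ∧ 1 < B.card ∧ (∃ y ∈ C, y < x)) ∨
    ((∀ y ∈ C, x ≤ y) ∧ 1 < C.card ∧ (∃ y ∈ B, y < x)))

/-- In the linear representation there is an arc `(i, j)` iff `i < j` and some
block `B ∈ P` has minimum `i` and contains `j`. -/
def IsArc (P : Finset (Finset ℕ)) (i j : ℕ) : Prop :=
  i < j ∧ ∃ B ∈ P, i ∈ B ∧ j ∈ B ∧ ∀ y ∈ B, i ≤ y

def IsLeftEndpoint (P : Finset (Finset ℕ)) (x : ℕ) : Prop := ∃ j, IsArc P x j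

def IsRightEndpoint (P : Finset (Finset ℕ)) (x : ℕ) : Prop := ∃ i, IsArc P i x

/-- An origin is only a left-hand endpoint. -/
def IsOrigin (P : Finset (Finset ℕ)) (x : ℕ) : Prop :=
  IsLeftEndpoint P x ∧ ¬ IsRightEndpoint P x

/-- A transient is both a left-hand and a right-hand endpoint. -/
def IsTransient (P : Finset (Finset ℕ)) (x : ℕ) : Prop :=
  IsLeftEndpoint P x ∧ IsRightEndpoint P x

/-- A destination is only a right-hand endpoint. -/
def IsDestination (P : Finset (Finset ℕ)) (x : ℕ) : Prop :=
  ¬ IsLeftEndpoint P x ∧ IsRightEndpoint P x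

/-- A singleton is an isolated vertex of `[n]`. -/
def IsSingletonVertex (n : ℕ) (P : Finset (Finset ℕ)) (x : ℕ) : Prop :=
  x ∈ Finset.Icc 1 n ∧ ¬ IsLeftEndpoint P x ∧ ¬ IsRightEndpoint P x

/-- No two arcs cross: there are no arcs `(i₁,j₁)`, `(i₂,j₂)` with
`i₁ < i₂ < j₁ < j₂`. -/
def NoncrossingLP (P : Finset (Finset ℕ)) : Prop :=
  ¬ ∃ i₁ i₂ j₁ j₂ : ℕ, IsArc P i₁ j₁ ∧ IsArc P i₂ j₂ ∧ i₁ < i₂ ∧ i₂ < j₁ ∧ j₁ < j₂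

/-- No two arcs nest: there are no arcs `(i₁,j₁)`, `(i₂,j₂)` with
`i₁ < i₂ < j₂ < j₁`. -/
def NonnestingLP (P : Finset (Finset ℕ)) : Prop :=
  ¬ ∃ i₁ i₂ j₁ j₂ : ℕ, IsArc P i₁ j₁ ∧ IsArc P i₂ j₂ ∧ i₁ < i₂ ∧ i₂ < j₂ ∧ j₂ < j₁

/-- The set of descent positions of a permutation `π₁ ⋯ π_n` (0-indexed:
`i` is a descent iff `π (i+1) < π i`). -/
def descentSet {n : ℕ} (π : Equiv.Perm (Fin n)) : Set (Fin n) :=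
  {i | ∃ h : (i : ℕ) + 1 < n, π ⟨(i : ℕ) + 1, h⟩ < π i}

/-- A permutation tableau of length `n`, encoded via the boundary labeling by
`1,…,n` from the top-right corner to the bottom-left corner (label `m`
corresponds to `(⟨m-1, _⟩ : Fin n)`).  `isRow i = true` iff label `i` labels a
row (the label `1` always labels a row).  The cells of the Ferrers diagram are
exactly the pairs (row `i`, column `j`) with `i < j`; rows above have smaller
labels and columns to the left have larger labels.  `filling i j = true`
records that the cell in row `i` and column `j` exists and contains a `1`
(cells containing `0` and non-cells are `false`).  Every column contains at
least one `1`, and no cell containing a `0` has both a `1` above it in its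
column and a `1` to its left in its row. -/
structure PermTableau (n : ℕ) where
  isRow : Fin n → Bool
  filling : Fin n → Fin n → Bool
  first_row : ∀ h : 0 < n, isRow ⟨0, h⟩ = true
  filling_cells : ∀ i j : Fin n, filling i j = true →
    isRow i = true ∧ isRow j = false ∧ i < j
  col_has_one : ∀ j : Fin n, isRow j = false → ∃ i : Fin n, filling i j = true
  no_bad_zero : ∀ i j : Fin n, isRow i = true → isRow j = false → i < j →
    (∃ i' : Fin n, i' < i ∧ filling i' j = true) →
    (∃ j' : Fin n, j < j' ∧ filling i j' = true) →
    filling i j = true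

namespace PermTableau

variable {n : ℕ}

/-- The diagram has a cell in row `i` and column `j` iff `i < j`. -/
def IsCell (T : PermTableau n) (i j : Fin n) : Prop :=
  T.isRow i = true ∧ T.isRow j = false ∧ i < j

/-- The number of rows. -/
noncomputable def numRows (T : PermTableau n) : ℕ := {i : Fin n | T.isRow i = true}.ncard

/-- The number of columns. -/
noncomputable def numCols (T : PermTableau n) : ℕ := {j : Fin n | T.isRow j = false}.ncard

/-- The cell in row `i`, column `j` contains a topmost `1`: it contains a `1`
and no cell above it in column `j` contains a `1`. -/
def TopmostOne (T : PermTableau n) (i j : Fin n) : Prop :=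
  T.filling i j = true ∧ ∀ i' : Fin n, i' < i → T.filling i' j = false

/-- The cell in row `i`, column `j` contains a restricted `0`: it contains a
`0` and some cell above it in column `j` contains a `1`. -/
def RestrictedZero (T : PermTableau n) (i j : Fin n) : Prop :=
  T.IsCell i j ∧ T.filling i j = false ∧ ∃ i' : Fin n, i' < i ∧ T.filling i' j = true

/-- A rightmost restricted `0` is a restricted `0` that is rightmost (minimal
column label) among the restricted `0`'s in its row. -/
def RightmostRestrictedZero (T : PermTableau n) (i j : Fin n) : Prop :=
  T.RestrictedZero i j ∧ ∀ j' : Fin n, T.RestrictedZero i j' → j ≤ j'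

/-- A cell is dotted if it contains a topmost `1` or a rightmost restricted `0`. -/
def Dotted (T : PermTableau n) (i j : Fin n) : Prop :=
  T.TopmostOne i j ∨ T.RightmostRestrictedZero i j

/-- `T` avoids the pattern `J₂`. -/
def AvoidsJ2 (T : PermTableau n) : Prop :=
  ¬ ∃ i₁ i₂ j₁ j₂ : Fin n,
    T.isRow i₁ = true ∧ T.isRow i₂ = true ∧ T.isRow j₁ = false ∧ T.isRow j₂ = false ∧
    i₁ < i₂ ∧ i₂ < j₁ ∧ j₁ < j₂ ∧
    T.Dotted i₁ j₁ ∧ T.Dotted i₂ j₂ ∧ ¬ T.Dotted i₂ j₁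

/-- `T` avoids the pattern `I₂`. -/
def AvoidsI2 (T : PermTableau n) : Prop :=
  ¬ ∃ i₁ i₂ j₁ j₂ : Fin n,
    T.isRow i₁ = true ∧ T.isRow i₂ = true ∧ T.isRow j₁ = false ∧ T.isRow j₂ = false ∧
    i₁ < i₂ ∧ i₂ < j₁ ∧ j₁ < j₂ ∧
    T.Dotted i₁ j₂ ∧ T.Dotted i₂ j₁ ∧ ¬ T.Dotted i₂ j₂

end PermTableau

open Finset Equiv
open scoped Classical

noncomputable section
variable {n : ℕ}

def rowF (T : PermTableau n) : Finset (Fin n) := univ.filter (fun i => T.isRow i = true)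
def unresF (T : PermTableau n) : Finset (Fin n) :=
  univ.filter (fun i => T.isRow i = true ∧ ¬ ∃ j, T.RestrictedZero i j)
def gset (U S : Finset (Fin n)) : Finset (Fin n) := S ∪ U.filter (fun i => ∀ s ∈ S, i ≤ s)
def csEmb : Fin n ↪ Fin (n+1) := ⟨Fin.castSucc, Fin.castSucc_injective n⟩
def ExtD (X : Type*) (f : X → Finset (Fin n)) : Type _ :=
  X ⊕ {p : X × Finset (Fin n) // p.2.Nonempty ∧ p.2 ⊆ f p.1}

theorem PermTableau.ext' {T₁ T₂ : PermTableau n} (h1 : T₁.isRow = T₂.isRow)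
    (h2 : T₁.filling = T₂.filling) : T₁ = T₂ := by
  cases T₁; cases T₂; simp_all

instance : Unique (PermTableau 0) where
  default := ⟨fun i => i.elim0, fun i => i.elim0, fun h => absurd h (lt_irrefl 0),
    fun i => i.elim0, fun j => j.elim0, fun i => i.elim0⟩
  uniq T := by
    apply PermTableau.ext' <;> funext i <;> exact i.elim0

/-! ### restriction -/

def restrictT (T : PermTableau (n+1)) : PermTableau n where
  isRow i := T.isRow i.castSucc
  filling i j := T.filling i.castSucc j.castSucc
  first_row h := by
    show T.isRow ((⟨0, h⟩ : Fin n).castSucc) = true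
    have : (⟨0, h⟩ : Fin n).castSucc = ⟨0, Nat.succ_pos n⟩ := rfl
    rw [this]; exact T.first_row (Nat.succ_pos n)
  filling_cells i j hf := by
    obtain ⟨a, b, c⟩ := T.filling_cells _ _ hf
    exact ⟨a, b, by simpa [Fin.castSucc_lt_castSucc_iff] using c⟩
  col_has_one j hj := by
    obtain ⟨i, hi⟩ := T.col_has_one j.castSucc hj
    have hlt : i < j.castSucc := (T.filling_cells _ _ hi).2.2
    have hne : i ≠ Fin.last n :=
      Fin.ne_last_of_lt (lt_of_lt_of_le hlt (Fin.le_last _))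
    refine ⟨i.castPred hne, ?_⟩
    show T.filling ((i.castPred hne).castSucc) j.castSucc = true
    rwa [Fin.castSucc_castPred]
  no_bad_zero i j hri hcj hij h1 h2 := by
    apply T.no_bad_zero i.castSucc j.castSucc hri hcj
      (by simpa [Fin.castSucc_lt_castSucc_iff] using hij)
    · obtain ⟨i', hi1, hi2⟩ := h1
      exact ⟨i'.castSucc, by simpa [Fin.castSucc_lt_castSucc_iff] using hi1, hi2⟩
    · obtain ⟨j', hj1, hj2⟩ := h2
      exact ⟨j'.castSucc, by simpa [Fin.castSucc_lt_castSucc_iff] using hj1, hj2⟩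

/-! ### extension by an empty bottom row -/

def extendRow (T : PermTableau n) : PermTableau (n+1) where
  isRow := Fin.snoc T.isRow true
  filling := Fin.snoc (fun i => Fin.snoc (T.filling i) false) (fun _ => false)
  first_row h := by
    by_cases h0 : (⟨0, h⟩ : Fin (n+1)) = Fin.last n
    · rw [h0, Fin.snoc_last]
    · have hn : 0 < n := by
        rcases Nat.eq_zero_or_pos n with h' | h'
        · exfalso; apply h0; subst h'; rfl
        · exact h'
      have he : (⟨0, h⟩ : Fin (n+1)) = (⟨0, hn⟩ : Fin n).castSucc := rfl
      rw [he, Fin.snoc_castSucc]; exact T.first_row hn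
  filling_cells x y hf := by
    induction x using Fin.lastCases with
    | last => simp [Fin.snoc_last] at hf
    | cast i =>
      induction y using Fin.lastCases with
      | last => simp [Fin.snoc_castSucc, Fin.snoc_last] at hf
      | cast j =>
        simp only [Fin.snoc_castSucc] at hf ⊢
        obtain ⟨a, b, c⟩ := T.filling_cells _ _ hf
        exact ⟨a, b, by simpa [Fin.castSucc_lt_castSucc_iff]⟩
  col_has_one y hy := by
    induction y using Fin.lastCases with
    | last => simp [Fin.snoc_last] at hy
    | cast j =>
      rw [Fin.snoc_castSucc] at hy
      obtain ⟨i, hi⟩ := T.col_has_one j hy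
      exact ⟨i.castSucc, by simp [Fin.snoc_castSucc, hi]⟩
  no_bad_zero x y hrx hcy hxy h1 h2 := by
    induction y using Fin.lastCases with
    | last => simp [Fin.snoc_last] at hcy
    | cast j =>
      induction x using Fin.lastCases with
      | last => exact absurd hxy (by simp [Fin.lt_iff_val_lt_val, Fin.le_last, Nat.not_lt,
          Nat.lt_succ_iff, Fin.is_le])
      | cast i =>
        simp only [Fin.snoc_castSucc] at hrx hcy ⊢
        apply T.no_bad_zero i j hrx hcy (by simpa [Fin.castSucc_lt_castSucc_iff] using hxy)
        · obtain ⟨i', hi1, hi2⟩ := h1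
          have hne : i' ≠ Fin.last n := Fin.ne_last_of_lt (lt_of_lt_of_le hi1 (Fin.le_last _))
          rw [← Fin.castSucc_castPred _ hne, Fin.snoc_castSucc, Fin.snoc_castSucc] at hi2
          refine ⟨i'.castPred hne, ?_, hi2⟩
          rw [← Fin.castSucc_lt_castSucc_iff, Fin.castSucc_castPred]; exact hi1
        · obtain ⟨j', hj1, hj2⟩ := h2
          have hne : j' ≠ Fin.last n := by
            intro he; rw [he, Fin.snoc_castSucc, Fin.snoc_last] at hj2; exact absurd hj2 (by simp)
          rw [← Fin.castSucc_castPred _ hne, Fin.snoc_castSucc, Fin.snoc_castSucc] at hj2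
          refine ⟨j'.castPred hne, ?_, hj2⟩
          rw [← Fin.castSucc_lt_castSucc_iff, Fin.castSucc_castPred]; exact hj1

/-! ### extension by a new leftmost column -/

def extendCol (T : PermTableau n) (S : Finset (Fin n)) (hS : S.Nonempty)
    (hSU : S ⊆ unresF T) : PermTableau (n+1) where
  isRow := Fin.snoc T.isRow false
  filling := Fin.snoc (fun i => Fin.snoc (T.filling i) (decide (i ∈ S))) (fun _ => false)
  first_row h := by
    obtain ⟨s, hs⟩ := hS
    have hn : 0 < n := lt_of_le_of_lt (Nat.zero_le s.val) s.isLt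
    have he : (⟨0, h⟩ : Fin (n+1)) = (⟨0, hn⟩ : Fin n).castSucc := rfl
    rw [he, Fin.snoc_castSucc]; exact T.first_row hn
  filling_cells x y hf := by
    induction x using Fin.lastCases with
    | last => simp [Fin.snoc_last] at hf
    | cast i =>
      induction y using Fin.lastCases with
      | last =>
        rw [Fin.snoc_castSucc, Fin.snoc_last, decide_eq_true_eq] at hf
        have hi := hSU hf
        simp only [unresF, mem_filter] at hi
        exact ⟨by rw [Fin.snoc_castSucc]; exact hi.2.1, by rw [Fin.snoc_last],
          Fin.castSucc_lt_last i⟩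
      | cast j =>
        simp only [Fin.snoc_castSucc] at hf ⊢
        obtain ⟨a, b, c⟩ := T.filling_cells _ _ hf
        exact ⟨a, b, by simpa [Fin.castSucc_lt_castSucc_iff]⟩
  col_has_one y hy := by
    induction y using Fin.lastCases with
    | last =>
      obtain ⟨s, hs⟩ := hS
      exact ⟨s.castSucc, by simp [Fin.snoc_castSucc, Fin.snoc_last, hs]⟩
    | cast j =>
      rw [Fin.snoc_castSucc] at hy
      obtain ⟨i, hi⟩ := T.col_has_one j hy
      exact ⟨i.castSucc, by simp [Fin.snoc_castSucc, hi]⟩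
  no_bad_zero x y hrx hcy hxy h1 h2 := by
    induction x using Fin.lastCases with
    | last => simp [Fin.snoc_last] at hrx
    | cast i =>
    rw [Fin.snoc_castSucc] at hrx
    induction y using Fin.lastCases with
    | last =>
      exfalso
      obtain ⟨j', hj1, hj2⟩ := h2
      exact absurd hj1 (by simp [Fin.lt_iff_val_lt_val, Nat.not_lt, Nat.lt_succ_iff, Fin.is_le])
    | cast j =>
      rw [Fin.snoc_castSucc] at hcy
      simp only [Fin.snoc_castSucc]
      -- extract the "1 above" witness inside the old tableau
      obtain ⟨i', hi1, hi2⟩ := h1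
      have hne : i' ≠ Fin.last n := Fin.ne_last_of_lt (lt_of_lt_of_le hi1 (Fin.le_last _))
      rw [← Fin.castSucc_castPred _ hne, Fin.snoc_castSucc, Fin.snoc_castSucc] at hi2
      have hi1' : i'.castPred hne < i := by
        rw [← Fin.castSucc_lt_castSucc_iff, Fin.castSucc_castPred]; exact hi1
      obtain ⟨j', hj1, hj2⟩ := h2
      by_cases hjl : j' = Fin.last n
      · -- witness is the new column: row i is unrestricted, so no restricted zero
        rw [hjl, Fin.snoc_castSucc, Fin.snoc_last, decide_eq_true_eq] at hj2
        have hiu := hSU hj2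
        simp only [unresF, mem_filter] at hiu
        by_contra hf0
        exact hiu.2.2 ⟨j, ⟨hrx, hcy, by simpa [Fin.castSucc_lt_castSucc_iff] using hxy⟩,
          by simpa using hf0, i'.castPred hne, hi1', hi2⟩
      · rw [← Fin.castSucc_castPred _ hjl, Fin.snoc_castSucc, Fin.snoc_castSucc] at hj2
        apply T.no_bad_zero i j hrx hcy (by simpa [Fin.castSucc_lt_castSucc_iff] using hxy)
          ⟨_, hi1', hi2⟩
        refine ⟨j'.castPred hjl, ?_, hj2⟩
        rw [← Fin.castSucc_lt_castSucc_iff, Fin.castSucc_castPred]; exact hj1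

/-! ### value lemmas -/

@[simp] lemma extendRow_isRow_cs (T : PermTableau n) (i : Fin n) :
    (extendRow T).isRow i.castSucc = T.isRow i := by
  simp only [extendRow]; exact Fin.snoc_castSucc _ _ _
@[simp] lemma extendRow_isRow_last (T : PermTableau n) :
    (extendRow T).isRow (Fin.last n) = true := by
  simp only [extendRow]; exact Fin.snoc_last _ _
@[simp] lemma extendRow_fill_cs (T : PermTableau n) (i j : Fin n) :
    (extendRow T).filling i.castSucc j.castSucc = T.filling i j := by
  simp only [extendRow]
  rw [Fin.snoc_castSucc, Fin.snoc_castSucc]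

variable {S : Finset (Fin n)}

@[simp] lemma extendCol_isRow_cs (T : PermTableau n) (hS : S.Nonempty) (hSU : S ⊆ unresF T)
    (i : Fin n) : (extendCol T S hS hSU).isRow i.castSucc = T.isRow i := by
  simp only [extendCol]; exact Fin.snoc_castSucc _ _ _
@[simp] lemma extendCol_isRow_last (T : PermTableau n) (hS : S.Nonempty) (hSU : S ⊆ unresF T) :
    (extendCol T S hS hSU).isRow (Fin.last n) = false := by
  simp only [extendCol]; exact Fin.snoc_last _ _
@[simp] lemma extendCol_fill_cs (T : PermTableau n) (hS : S.Nonempty) (hSU : S ⊆ unresF T)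
    (i j : Fin n) : (extendCol T S hS hSU).filling i.castSucc j.castSucc = T.filling i j := by
  simp only [extendCol]
  rw [Fin.snoc_castSucc, Fin.snoc_castSucc]
@[simp] lemma extendCol_fill_last (T : PermTableau n) (hS : S.Nonempty) (hSU : S ⊆ unresF T)
    (i : Fin n) : (extendCol T S hS hSU).filling i.castSucc (Fin.last n) = decide (i ∈ S) := by
  simp only [extendCol]
  rw [Fin.snoc_castSucc, Fin.snoc_last]

lemma fill_last_left (T : PermTableau (n+1)) (y : Fin (n+1)) :
    T.filling (Fin.last n) y = false := by
  by_contra h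
  have := (T.filling_cells _ _ (by simpa using h)).2.2
  exact absurd this (by simp [Fin.lt_iff_val_lt_val, Nat.not_lt, Nat.lt_succ_iff, Fin.is_le])

def colSet (T : PermTableau (n+1)) : Finset (Fin n) :=
  univ.filter (fun i => T.filling i.castSucc (Fin.last n) = true)

lemma colSet_spec (T : PermTableau (n+1)) (h : T.isRow (Fin.last n) = false) :
    (colSet T).Nonempty ∧ colSet T ⊆ unresF (restrictT T) := by
  constructor
  · obtain ⟨i, hi⟩ := T.col_has_one _ h
    have hne : i ≠ Fin.last n := by
      intro he; rw [he, fill_last_left] at hi; exact absurd hi (by simp)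
    exact ⟨i.castPred hne, by simp [colSet, Fin.castSucc_castPred, hi]⟩
  · intro i hi
    simp only [colSet, mem_filter, mem_univ, true_and] at hi
    have hrow : T.isRow i.castSucc = true := (T.filling_cells _ _ hi).1
    simp only [unresF, mem_filter, mem_univ, true_and]
    refine ⟨hrow, ?_⟩
    rintro ⟨j, ⟨hc1, hc2, hc3⟩, hf0, i', hi1, hi2⟩
    have : T.filling i.castSucc j.castSucc = true := by
      apply T.no_bad_zero i.castSucc j.castSucc hc1 hc2
        (by simpa [Fin.castSucc_lt_castSucc_iff] using hc3)
      · exact ⟨i'.castSucc, by simpa [Fin.castSucc_lt_castSucc_iff] using hi1, hi2⟩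
      · exact ⟨Fin.last n, Fin.castSucc_lt_last j, hi⟩
    simp only [restrictT] at hf0
    rw [this] at hf0; exact absurd hf0 (by simp)

def tabD : PermTableau (n+1) ≃ ExtD (PermTableau n) unresF where
  toFun T := if h : T.isRow (Fin.last n) = true then Sum.inl (restrictT T)
    else Sum.inr ⟨(restrictT T, colSet T),
      (colSet_spec T (by simpa using h)).1, (colSet_spec T (by simpa using h)).2⟩
  invFun := Sum.elim extendRow (fun p => extendCol p.1.1 p.1.2 p.2.1 p.2.2)
  left_inv T := by
    dsimp only
    by_cases h : T.isRow (Fin.last n) = true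
    · erw [dif_pos h, Sum.elim_inl]
      apply PermTableau.ext'
      · funext x
        induction x using Fin.lastCases with
        | last => rw [extendRow_isRow_last, h]
        | cast i => rw [extendRow_isRow_cs]; rfl
      · funext x y
        induction x using Fin.lastCases with
        | last =>
          simp only [extendRow]
          rw [Fin.snoc_last, fill_last_left]
        | cast i =>
          induction y using Fin.lastCases with
          | last =>
            simp only [extendRow]
            rw [Fin.snoc_castSucc, Fin.snoc_last]
            by_contra hne
            have hft : T.filling i.castSucc (Fin.last n) = true := by
              cases hft : T.filling i.castSucc (Fin.last n)
              · exact absurd hft.symm hne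
              · rfl
            exact absurd ((T.filling_cells _ _ hft).2.1) (by simp [h])
          | cast j => rw [extendRow_fill_cs]; rfl
    · erw [dif_neg h, Sum.elim_inr]
      apply PermTableau.ext'
      · funext x
        induction x using Fin.lastCases with
        | last =>
          rw [extendCol_isRow_last]
          cases hr : T.isRow (Fin.last n)
          · rfl
          · exact absurd hr h
        | cast i => rw [extendCol_isRow_cs]; rfl
      · funext x y
        induction x using Fin.lastCases with
        | last =>
          simp only [extendCol]
          rw [Fin.snoc_last, fill_last_left]
        | cast i =>
          induction y using Fin.lastCases with
          | last =>
            rw [extendCol_fill_last]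
            simp only [colSet, mem_filter, mem_univ, true_and]
            cases hft : T.filling i.castSucc (Fin.last n) <;> simp [hft]
          | cast j => rw [extendCol_fill_cs]; rfl
  right_inv p := by
    dsimp only
    rcases p with T | ⟨⟨T, S⟩, h1, h2⟩
    · simp only [Sum.elim_inl]
      erw [dif_pos (extendRow_isRow_last T)]
      congr 1
      apply PermTableau.ext'
      · funext i; exact extendRow_isRow_cs T i
      · funext i j; exact extendRow_fill_cs T i j
    · simp only [Sum.elim_inr]
      erw [dif_neg (show ¬ (extendCol T S h1 h2).isRow (Fin.last n) = true by simp)]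
      congr 1
      apply Subtype.ext
      apply Prod.ext
      · apply PermTableau.ext'
        · funext i; exact extendCol_isRow_cs T h1 h2 i
        · funext i j; exact extendCol_fill_cs T h1 h2 i j
      · ext i
        simp [colSet]

/-! ### tableau statistics lemmas -/

lemma cs_ne_last (i : Fin n) : i.castSucc ≠ Fin.last n := Fin.ne_last_of_lt (Fin.castSucc_lt_last i)

lemma no_RZ_last (T : PermTableau (n+1)) : ¬ ∃ j, T.RestrictedZero (Fin.last n) j := by
  rintro ⟨j, ⟨_, _, h3⟩, _⟩
  exact absurd h3 (Fin.le_last j).not_gt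

lemma RZ_extendRow (T : PermTableau n) (i : Fin n) :
    (∃ j, (extendRow T).RestrictedZero i.castSucc j) ↔ (∃ j, T.RestrictedZero i j) := by
  constructor
  · rintro ⟨j, ⟨c1, c2, c3⟩, f0, i', h1, h2⟩
    have hj : j ≠ Fin.last n := by
      intro he; rw [he, extendRow_isRow_last] at c2; exact absurd c2 (by simp)
    have hi' : i' ≠ Fin.last n := Fin.ne_last_of_lt (lt_of_lt_of_le h1 (Fin.le_last _))
    rw [← Fin.castSucc_castPred j hj] at c2 c3 f0 h2
    rw [← Fin.castSucc_castPred i' hi'] at h1 h2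
    rw [extendRow_isRow_cs] at c1 c2
    rw [extendRow_fill_cs] at f0 h2
    exact ⟨j.castPred hj, ⟨c1, c2, by rwa [Fin.castSucc_lt_castSucc_iff] at c3⟩, f0,
      i'.castPred hi', by rwa [Fin.castSucc_lt_castSucc_iff] at h1, h2⟩
  · rintro ⟨j, ⟨c1, c2, c3⟩, f0, i', h1, h2⟩
    exact ⟨j.castSucc, ⟨by rwa [extendRow_isRow_cs], by rwa [extendRow_isRow_cs],
      by rwa [Fin.castSucc_lt_castSucc_iff]⟩, by rwa [extendRow_fill_cs],
      i'.castSucc, by rwa [Fin.castSucc_lt_castSucc_iff], by rwa [extendRow_fill_cs]⟩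

lemma rowF_extendRow (T : PermTableau n) :
    rowF (extendRow T) = insert (Fin.last n) ((rowF T).map csEmb) := by
  ext x
  induction x using Fin.lastCases with
  | last => simp [rowF]
  | cast i =>
    simp only [rowF, mem_filter, mem_univ, true_and, mem_insert, mem_map, extendRow_isRow_cs]
    constructor
    · intro h; exact Or.inr ⟨i, by simpa [csEmb] using h⟩
    · rintro (h | ⟨j, hj, he⟩)
      · exact absurd h (cs_ne_last i)
      · have : j = i := by simpa [csEmb] using he
        subst this; exact hj

lemma unresF_extendRow (T : PermTableau n) :
    unresF (extendRow T) = insert (Fin.last n) ((unresF T).map csEmb) := by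
  ext x
  induction x using Fin.lastCases with
  | last =>
    simp only [unresF, mem_filter, mem_univ, true_and, mem_insert]
    constructor
    · intro _; simp
    · intro _; exact ⟨extendRow_isRow_last T, no_RZ_last _⟩
  | cast i =>
    simp only [unresF, mem_filter, mem_univ, true_and, mem_insert, mem_map,
      extendRow_isRow_cs, RZ_extendRow]
    constructor
    · intro h; exact Or.inr ⟨i, by simpa [csEmb] using h⟩
    · rintro (h | ⟨j, hj, he⟩)
      · exact absurd h (cs_ne_last i)
      · have : j = i := by simpa [csEmb] using he
        subst this; exact hj

lemma rowF_extendCol (T : PermTableau n) (hS : S.Nonempty) (hSU : S ⊆ unresF T) :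
    rowF (extendCol T S hS hSU) = (rowF T).map csEmb := by
  ext x
  induction x using Fin.lastCases with
  | last =>
    simp only [rowF, mem_filter, mem_univ, true_and, extendCol_isRow_last, mem_map]
    constructor
    · intro h; exact absurd h (by simp)
    · rintro ⟨j, _, he⟩; exact absurd he (by simpa [csEmb] using cs_ne_last j)
  | cast i =>
    simp only [rowF, mem_filter, mem_univ, true_and, extendCol_isRow_cs, mem_map]
    constructor
    · intro h; exact ⟨i, by simpa [csEmb] using h⟩
    · rintro ⟨j, hj, he⟩
      have : j = i := by simpa [csEmb] using he
      subst this; exact hj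

lemma RZ_extendCol (T : PermTableau n) (hS : S.Nonempty) (hSU : S ⊆ unresF T) (i : Fin n)
    (hrow : T.isRow i = true) :
    (∃ j, (extendCol T S hS hSU).RestrictedZero i.castSucc j) ↔
      ((∃ j, T.RestrictedZero i j) ∨ (i ∉ S ∧ ∃ s ∈ S, s < i)) := by
  constructor
  · rintro ⟨j, ⟨c1, c2, c3⟩, f0, i', h1, h2⟩
    have hi' : i' ≠ Fin.last n := Fin.ne_last_of_lt (lt_of_lt_of_le h1 (Fin.le_last _))
    rw [← Fin.castSucc_castPred i' hi'] at h1 h2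
    rw [Fin.castSucc_lt_castSucc_iff] at h1
    by_cases hj : j = Fin.last n
    · subst hj
      rw [extendCol_fill_last, decide_eq_true_eq] at h2
      rw [extendCol_fill_last] at f0
      refine Or.inr ⟨?_, i'.castPred hi', h2, h1⟩
      intro hmem; rw [decide_eq_true hmem] at f0; exact absurd f0 (by simp)
    · rw [← Fin.castSucc_castPred j hj] at c2 c3 f0 h2
      rw [extendCol_isRow_cs] at c2
      rw [extendCol_fill_cs] at f0 h2
      exact Or.inl ⟨j.castPred hj, ⟨hrow, c2, by rwa [Fin.castSucc_lt_castSucc_iff] at c3⟩, f0,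
        i'.castPred hi', h1, h2⟩
  · rintro (⟨j, ⟨c1, c2, c3⟩, f0, i', h1, h2⟩ | ⟨hiS, s, hsS, hsi⟩)
    · exact ⟨j.castSucc, ⟨by rwa [extendCol_isRow_cs], by rwa [extendCol_isRow_cs],
        by rwa [Fin.castSucc_lt_castSucc_iff]⟩, by rwa [extendCol_fill_cs],
        i'.castSucc, by rwa [Fin.castSucc_lt_castSucc_iff], by rwa [extendCol_fill_cs]⟩
    · refine ⟨Fin.last n, ⟨by rwa [extendCol_isRow_cs], extendCol_isRow_last T hS hSU,
        Fin.castSucc_lt_last i⟩, ?_, s.castSucc, by rwa [Fin.castSucc_lt_castSucc_iff], ?_⟩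
      · rw [extendCol_fill_last, decide_eq_false hiS]
      · rw [extendCol_fill_last, decide_eq_true hsS]

lemma unresF_extendCol (T : PermTableau n) (hS : S.Nonempty) (hSU : S ⊆ unresF T) :
    unresF (extendCol T S hS hSU) = (gset (unresF T) S).map csEmb := by
  ext x
  induction x using Fin.lastCases with
  | last =>
    simp only [unresF, mem_filter, mem_univ, true_and, extendCol_isRow_last, mem_map]
    constructor
    · intro h; exact absurd h.1 (by simp)
    · rintro ⟨j, _, he⟩; exact absurd he (by simpa [csEmb] using cs_ne_last j)
  | cast i =>
    have hmap : i.castSucc ∈ (gset (unresF T) S).map csEmb ↔ i ∈ gset (unresF T) S := by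
      simp only [mem_map]
      constructor
      · rintro ⟨j, hj, he⟩
        have : j = i := by simpa [csEmb] using he
        subst this; exact hj
      · intro h; exact ⟨i, h, by simp [csEmb]⟩
    rw [hmap]
    have hL : i.castSucc ∈ unresF (extendCol T S hS hSU) ↔
        (T.isRow i = true ∧ ¬ ∃ j, (extendCol T S hS hSU).RestrictedZero i.castSucc j) := by
      simp [unresF]
    have hR : i ∈ gset (unresF T) S ↔ i ∈ S ∨ (i ∈ unresF T ∧ ∀ s ∈ S, i ≤ s) := by
      simp [gset]
    have hU : i ∈ unresF T ↔ (T.isRow i = true ∧ ¬ ∃ j, T.RestrictedZero i j) := by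
      simp [unresF]
    rw [hL, hR, hU]
    by_cases hrow : T.isRow i = true
    · rw [RZ_extendCol T hS hSU i hrow]
      by_cases hiS : i ∈ S
      · have hu := hSU hiS
        rw [hU] at hu
        constructor
        · intro _; exact Or.inl hiS
        · intro _
          refine ⟨hrow, ?_⟩
          rintro (h | ⟨hns, _⟩)
          · exact hu.2 h
          · exact hns hiS
      · constructor
        · rintro ⟨_, hn⟩
          refine Or.inr ⟨⟨hrow, fun h => hn (Or.inl h)⟩,
            fun s hs => le_of_not_gt (fun hlt => hn (Or.inr ⟨hiS, s, hs, hlt⟩))⟩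
        · rintro (h | ⟨⟨_, hnr⟩, hle⟩)
          · exact absurd h hiS
          · refine ⟨hrow, ?_⟩
            rintro (h | ⟨_, s, hs, hlt⟩)
            · exact hnr h
            · exact absurd hlt (hle s hs).not_gt
    · constructor
      · rintro ⟨h, _⟩; exact absurd h hrow
      · rintro (h | ⟨⟨h, _⟩, _⟩)
        · have := hSU h
          rw [hU] at this
          exact absurd this.1 hrow
        · exact absurd h hrow

theorem tabD_symm_inl (T' : PermTableau n) : tabD.symm (Sum.inl T') = extendRow T' := rfl
theorem tabD_symm_inr (p) : (tabD (n := n)).symm (Sum.inr p) =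
    extendCol p.1.1 p.1.2 p.2.1 p.2.2 := rfl

theorem tabD_inl_stats (T : PermTableau (n+1)) (T' : PermTableau n) (h : tabD T = Sum.inl T') :
    rowF T = insert (Fin.last n) ((rowF T').map csEmb) ∧
    unresF T = insert (Fin.last n) ((unresF T').map csEmb) := by
  have hT : T = extendRow T' := by
    have h2 := congrArg (tabD.symm) h
    rwa [Equiv.symm_apply_apply, tabD_symm_inl] at h2
  subst hT
  exact ⟨rowF_extendRow T', unresF_extendRow T'⟩

theorem tabD_inr_stats (T : PermTableau (n+1)) (p) (h : tabD T = Sum.inr p) :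
    rowF T = (rowF p.1.1).map csEmb ∧
    unresF T = (gset (unresF p.1.1) p.1.2).map csEmb := by
  have hT : T = extendCol p.1.1 p.1.2 p.2.1 p.2.2 := by
    have h2 := congrArg (tabD.symm) h
    rwa [Equiv.symm_apply_apply, tabD_symm_inr] at h2
  subst hT
  exact ⟨rowF_extendCol _ _ _, unresF_extendCol _ _ _⟩

def wexcF (π : Equiv.Perm (Fin n)) : Finset (Fin n) := univ.filter (fun i => i ≤ π i)
def lrmaxF (π : Equiv.Perm (Fin n)) : Finset (Fin n) :=
  univ.filter (fun i => ∀ j, j < i → π j < π i)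

/-! ### extension and restriction of permutations -/

def pext (ρ : Equiv.Perm (Fin n)) : Equiv.Perm (Fin (n+1)) where
  toFun := Fin.snoc (fun i => (ρ i).castSucc) (Fin.last n)
  invFun := Fin.snoc (fun i => (ρ⁻¹ i).castSucc) (Fin.last n)
  left_inv x := by
    induction x using Fin.lastCases with
    | last => simp
    | cast i => simp
  right_inv x := by
    induction x using Fin.lastCases with
    | last => simp
    | cast i => simp

@[simp] lemma pext_cs (ρ : Equiv.Perm (Fin n)) (i : Fin n) :
    pext ρ i.castSucc = (ρ i).castSucc := by simp [pext]
@[simp] lemma pext_last (ρ : Equiv.Perm (Fin n)) :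
    pext ρ (Fin.last n) = Fin.last n := by simp [pext]

lemma cs_ne_last' (i : Fin n) : i.castSucc ≠ Fin.last n :=
  Fin.ne_last_of_lt (Fin.castSucc_lt_last i)

def prestrict (π : Equiv.Perm (Fin (n+1))) (h : π (Fin.last n) = Fin.last n) :
    Equiv.Perm (Fin n) where
  toFun i := (π i.castSucc).castPred (by
    intro he
    exact cs_ne_last' i (π.injective (he.trans h.symm)))
  invFun i := (π⁻¹ i.castSucc).castPred (by
    intro he
    have : π (Fin.last n) = i.castSucc := by
      rw [← he]; simp
    exact cs_ne_last' i (by rw [← this, h])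
  )
  left_inv i := by
    apply Fin.castSucc_injective
    simp [Fin.castSucc_castPred]
  right_inv i := by
    apply Fin.castSucc_injective
    simp [Fin.castSucc_castPred]

@[simp] lemma prestrict_cs (π : Equiv.Perm (Fin (n+1))) (h) (i : Fin n) :
    ((prestrict π h) i).castSucc = π i.castSucc := by
  simp [prestrict, Fin.castSucc_castPred]

lemma pext_prestrict (π : Equiv.Perm (Fin (n+1))) (h : π (Fin.last n) = Fin.last n) :
    pext (prestrict π h) = π := by
  apply Equiv.ext
  intro x
  induction x using Fin.lastCases with
  | last => rw [pext_last, h]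
  | cast i => rw [pext_cs, prestrict_cs]

lemma prestrict_pext (ρ : Equiv.Perm (Fin n)) (h) :
    prestrict (pext ρ) h = ρ := by
  apply Equiv.ext
  intro i
  apply Fin.castSucc_injective
  rw [prestrict_cs, pext_cs]

/-! ### statistic transfer across pext -/

lemma mem_lrmaxF {π : Equiv.Perm (Fin n)} {i} :
    i ∈ lrmaxF π ↔ ∀ j, j < i → π j < π i := by simp [lrmaxF]

lemma mem_wexcF {π : Equiv.Perm (Fin n)} {i} : i ∈ wexcF π ↔ i ≤ π i := by simp [wexcF]

lemma lrmax_pext_cs (ρ : Equiv.Perm (Fin n)) (i : Fin n) :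
    i.castSucc ∈ lrmaxF (pext ρ) ↔ i ∈ lrmaxF ρ := by
  simp only [mem_lrmaxF]
  constructor
  · intro h j hj
    have := h j.castSucc (by rwa [Fin.castSucc_lt_castSucc_iff])
    rwa [pext_cs, pext_cs, Fin.castSucc_lt_castSucc_iff] at this
  · intro h j hj
    have hjne : j ≠ Fin.last n := Fin.ne_last_of_lt (hj.trans (Fin.castSucc_lt_last i))
    rw [← Fin.castSucc_castPred j hjne] at hj ⊢
    rw [pext_cs, pext_cs, Fin.castSucc_lt_castSucc_iff] at *
    exact h _ hj

lemma lrmax_pext_last (ρ : Equiv.Perm (Fin n)) : Fin.last n ∈ lrmaxF (pext ρ) := by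
  rw [mem_lrmaxF]
  intro j hj
  rw [pext_last]
  have : pext ρ j ≠ Fin.last n := by
    intro he
    exact (Fin.ne_last_of_lt hj) ((pext ρ).injective (he.trans (pext_last ρ).symm))
  exact Fin.lt_last_iff_ne_last.mpr this

lemma wexc_pext_cs (ρ : Equiv.Perm (Fin n)) (i : Fin n) :
    i.castSucc ∈ wexcF (pext ρ) ↔ i ∈ wexcF ρ := by
  simp only [mem_wexcF, pext_cs, Fin.castSucc_le_castSucc_iff]

lemma wexcF_pext (ρ : Equiv.Perm (Fin n)) :
    wexcF (pext ρ) = insert (Fin.last n) ((wexcF ρ).map csEmb) := by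
  ext x
  induction x using Fin.lastCases with
  | last =>
    simp only [mem_insert]
    constructor
    · intro _; simp
    · intro _; rw [mem_wexcF, pext_last]
  | cast i =>
    rw [wexc_pext_cs]
    simp only [mem_insert, mem_map]
    constructor
    · intro h; exact Or.inr ⟨i, h, rfl⟩
    · rintro (h | ⟨j, hj, he⟩)
      · exact absurd h (cs_ne_last' i)
      · have : j = i := by simpa [csEmb] using he
        subst this; exact hj

lemma lrmaxF_pext (ρ : Equiv.Perm (Fin n)) :
    lrmaxF (pext ρ) = insert (Fin.last n) ((lrmaxF ρ).map csEmb) := by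
  ext x
  induction x using Fin.lastCases with
  | last =>
    simp only [mem_insert]
    constructor
    · intro _; simp
    · intro _; exact lrmax_pext_last ρ
  | cast i =>
    rw [lrmax_pext_cs]
    simp only [mem_insert, mem_map]
    constructor
    · intro h; exact Or.inr ⟨i, h, rfl⟩
    · rintro (h | ⟨j, hj, he⟩)
      · exact absurd h (cs_ne_last' i)
      · have : j = i := by simpa [csEmb] using he
        subst this; exact hj

/-- an LR maximum is a weak excedance -/
lemma lrmax_le_self_apply (π : Equiv.Perm (Fin n)) (x : Fin n)
    (h : ∀ j, j < x → π j < π x) : x ≤ π x := by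
  have hsub : (Finset.Iic x).image π ⊆ Finset.Iic (π x) := by
    intro v hv
    simp only [Finset.mem_image, Finset.mem_Iic] at hv ⊢
    obtain ⟨j, hj, rfl⟩ := hv
    rcases lt_or_eq_of_le hj with hlt | rfl
    · exact (h j hlt).le
    · exact le_rfl
  have hcard := Finset.card_le_card hsub
  rw [Finset.card_image_of_injective _ π.injective] at hcard
  simp only [Fin.card_Iic] at hcard
  omega

/-! ### the cyclic chain permutation -/

section Chain
variable {N : ℕ} (S₀ : Finset (Fin (N+1)))

def chA : Finset (Fin (N+1)) := insert (Fin.last N) S₀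

lemma chA_card (hlast : Fin.last N ∉ S₀) : (chA S₀).card = S₀.card + 1 := by
  rw [chA, card_insert_of_notMem hlast]

variable (hlast : Fin.last N ∉ S₀)

/-- the elements of `S₀ ∪ {last}` in increasing order -/
def bfn (t : Fin (S₀.card + 1)) : Fin (N+1) :=
  ((chA S₀).orderIsoOfFin (chA_card S₀ hlast) t : Fin (N+1))

def sigC : Equiv.Perm (Fin (N+1)) :=
  (finRotate (S₀.card + 1)).extendDomain ((chA S₀).orderIsoOfFin (chA_card S₀ hlast)).toEquiv

variable {S₀}

lemma bfn_mem (t) : bfn S₀ hlast t ∈ chA S₀ :=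
  ((chA S₀).orderIsoOfFin (chA_card S₀ hlast) t).2

lemma bfn_strictMono : StrictMono (bfn S₀ hlast) := by
  intro s t hst
  exact ((chA S₀).orderIsoOfFin (chA_card S₀ hlast)).strictMono hst

lemma bfn_lt_iff {s t} : bfn S₀ hlast s < bfn S₀ hlast t ↔ s < t :=
  (bfn_strictMono hlast).lt_iff_lt

lemma bfn_inj : Function.Injective (bfn S₀ hlast) := (bfn_strictMono hlast).injective

lemma bfn_surj {x} (hx : x ∈ chA S₀) : ∃ t, bfn S₀ hlast t = x := by
  obtain ⟨t, ht⟩ := ((chA S₀).orderIsoOfFin (chA_card S₀ hlast)).surjective ⟨x, hx⟩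
  exact ⟨t, by rw [bfn, ht]⟩

lemma bfn_last : bfn S₀ hlast (Fin.last _) = Fin.last N := by
  obtain ⟨t, ht⟩ := bfn_surj hlast (mem_insert_self _ _)
  have hle : ∀ s, bfn S₀ hlast s ≤ bfn S₀ hlast t := by
    intro s
    rw [ht]
    exact Fin.le_last _
  have := (bfn_strictMono hlast).le_iff_le.mp (hle (Fin.last _))
  have ht' : t = Fin.last _ := le_antisymm (Fin.le_last t) this
  rw [← ht', ht]

lemma bfn_mem_S₀ {t} (ht : t ≠ Fin.last _) : bfn S₀ hlast t ∈ S₀ := by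
  have h1 := bfn_mem hlast t
  rw [chA, mem_insert] at h1
  rcases h1 with h1 | h1
  · exfalso
    apply ht
    apply bfn_inj hlast
    rw [bfn_last, h1]
  · exact h1

lemma sigC_bfn (t) : sigC S₀ hlast (bfn S₀ hlast t) = bfn S₀ hlast (t + 1) := by
  rw [sigC, bfn, bfn]
  have := Equiv.Perm.extendDomain_apply_image (finRotate (S₀.card + 1))
    ((chA S₀).orderIsoOfFin (chA_card S₀ hlast)).toEquiv t
  simp only [RelIso.coe_fn_toEquiv] at this
  rw [this, finRotate_succ_apply]

lemma sigC_not_mem {x} (hx : x ∉ chA S₀) : sigC S₀ hlast x = x :=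
  Equiv.Perm.extendDomain_apply_not_subtype _ _ hx

lemma sigC_last : sigC S₀ hlast (Fin.last N) = bfn S₀ hlast 0 := by
  rw [← bfn_last hlast, sigC_bfn, Fin.last_add_one]

lemma sigC_inv_bfn (t) : (sigC S₀ hlast)⁻¹ (bfn S₀ hlast (t + 1)) = bfn S₀ hlast t := by
  rw [← sigC_bfn hlast t, Equiv.Perm.inv_eq_iff_eq.mpr rfl]

lemma sigC_inv_not_mem {x} (hx : x ∉ chA S₀) : (sigC S₀ hlast)⁻¹ x = x := by
  nth_rewrite 1 [← sigC_not_mem hlast hx]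
  rw [Equiv.Perm.inv_eq_iff_eq.mpr rfl]

lemma sigC_inv_last : (sigC S₀ hlast)⁻¹ (Fin.last N) = bfn S₀ hlast (Fin.last _ - 1) := by
  nth_rewrite 1 [← bfn_last hlast (S₀ := S₀)]
  rw [show (Fin.last S₀.card : Fin (S₀.card + 1)) = (Fin.last _ - 1) + 1 from
    (sub_add_cancel _ _).symm, sigC_inv_bfn, add_sub_cancel_right]

end Chain

/-! ### Fin (m+1) arithmetic helpers -/

lemma fin_lt_add_one_iff_le {m : ℕ} {t : Fin (m+1)} (ht : t ≠ Fin.last m) {s : Fin (m+1)} :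
    s < t + 1 ↔ s ≤ t := by
  have hv := Fin.val_add_one t
  rw [if_neg ht] at hv
  rw [Fin.lt_iff_val_lt_val, Fin.le_iff_val_le_val, hv]
  omega

lemma fin_add_one_lt_add_one {m : ℕ} {r t : Fin (m+1)} (hrt : r < t) (ht : t ≠ Fin.last m) :
    r + 1 < t + 1 := by
  have hr : r ≠ Fin.last m := by
    intro he
    exact absurd (he ▸ hrt) (Fin.le_last t).not_gt
  have hv1 := Fin.val_add_one r
  have hv2 := Fin.val_add_one t
  rw [if_neg hr] at hv1
  rw [if_neg ht] at hv2
  rw [Fin.lt_iff_val_lt_val] at hrt ⊢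
  omega

lemma fin_add_one_ne_zero {m : ℕ} {t : Fin (m+1)} (ht : t ≠ Fin.last m) : t + 1 ≠ 0 := by
  intro he
  have := congrArg (· - 1) he
  simp only [add_sub_cancel_right, zero_sub] at this
  apply ht
  rw [this]
  apply Fin.ext
  have := Fin.coe_sub_one (0 : Fin (m+1))
  rw [if_pos rfl] at this
  rw [show -(1 : Fin (m+1)) = 0 - 1 from (zero_sub 1).symm, this]
  rfl

lemma fin_sub_one_lt_sub_one {m : ℕ} {s t : Fin (m+1)} (hst : s < t) (hs : s ≠ 0) :
    s - 1 < t - 1 := by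
  have ht : t ≠ 0 := by
    intro he
    rw [he] at hst
    exact absurd hst (Fin.zero_le s).not_gt
  have h1 := Fin.coe_sub_one s
  have h2 := Fin.coe_sub_one t
  rw [if_neg hs] at h1
  rw [if_neg ht] at h2
  rw [Fin.lt_iff_val_lt_val] at hst ⊢
  have hs0 : 0 < s.val := by
    rcases Nat.eq_zero_or_pos s.val with h | h
    · exact absurd (Fin.ext h) hs
    · exact h
  omega

lemma fin_sub_one_ne_last {m : ℕ} {t : Fin (m+1)} (ht : t ≠ 0) : t - 1 ≠ Fin.last m := by
  intro he
  have : t = Fin.last m + 1 := by rw [← he, sub_add_cancel]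
  rw [Fin.last_add_one] at this
  exact ht this

/-! ### forward key lemmas -/

section Forward
variable {N : ℕ} {Pp : Equiv.Perm (Fin (N+1))} {S₀ : Finset (Fin (N+1))}
  (hfix : Pp (Fin.last N) = Fin.last N) (hS : S₀.Nonempty)
  (hlast : Fin.last N ∉ S₀) (hsub : S₀ ⊆ lrmaxF Pp)

include hfix hsub in
lemma W_lemma : ∀ u ∈ chA S₀, ∀ y, y < u → Pp y < Pp u := by
  intro u hu y hy
  rw [chA, mem_insert] at hu
  rcases hu with rfl | hu
  · rw [hfix]
    refine Fin.lt_last_iff_ne_last.mpr (fun he => ?_)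
    exact (Fin.ne_last_of_lt hy) (Pp.injective (he.trans hfix.symm))
  · exact (mem_lrmaxF.mp (hsub hu)) y hy

include hS in
lemma card_S₀_pos : 0 < S₀.card := card_pos.mpr hS

include hS in
lemma zero_ne_last_idx : (0 : Fin (S₀.card + 1)) ≠ Fin.last _ := by
  intro he
  have := congrArg Fin.val he
  simp only [Fin.val_zero, Fin.val_last] at this
  exact absurd this.symm (Nat.pos_iff_ne_zero.mp (card_S₀_pos hS))

include hS in
lemma bfn_zero_mem : bfn S₀ hlast 0 ∈ S₀ :=
  bfn_mem_S₀ hlast (zero_ne_last_idx hS)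

lemma bfn_zero_min : ∀ s ∈ S₀, bfn S₀ hlast 0 ≤ s := by
  intro s hs
  obtain ⟨t, rfl⟩ := bfn_surj hlast (mem_insert_of_mem hs)
  exact (bfn_strictMono hlast).monotone (Fin.zero_le t)

lemma pi_last_apply : (Pp * sigC S₀ hlast) (Fin.last N) = Pp (bfn S₀ hlast 0) := by
  rw [Equiv.Perm.mul_apply, sigC_last]

lemma pi_bfn_apply (t) : (Pp * sigC S₀ hlast) (bfn S₀ hlast t) = Pp (bfn S₀ hlast (t + 1)) := by
  rw [Equiv.Perm.mul_apply, sigC_bfn]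

lemma pi_not_mem_apply {x} (hx : x ∉ chA S₀) : (Pp * sigC S₀ hlast) x = Pp x := by
  rw [Equiv.Perm.mul_apply, sigC_not_mem hlast hx]

include hfix hS in
lemma pi_last_ne : (Pp * sigC S₀ hlast) (Fin.last N) ≠ Fin.last N := by
  rw [pi_last_apply]
  intro he
  have := Pp.injective (he.trans hfix.symm)
  exact hlast (this ▸ bfn_zero_mem hS hlast)

include hfix hS hsub in
theorem KEY1 : wexcF (Pp * sigC S₀ hlast) = (wexcF Pp).erase (Fin.last N) := by
  ext x
  rw [mem_wexcF, mem_erase, mem_wexcF]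
  by_cases hx : x ∈ chA S₀
  · obtain ⟨t, rfl⟩ := bfn_surj hlast hx
    by_cases ht : t = Fin.last _
    · subst ht
      rw [bfn_last]
      constructor
      · intro h
        exact absurd (le_antisymm (Fin.le_last _) h) (pi_last_ne hfix hS hlast)
      · rintro ⟨h, _⟩
        exact absurd rfl h
    · have hmem : bfn S₀ hlast t ∈ S₀ := bfn_mem_S₀ hlast ht
      have hne : bfn S₀ hlast t ≠ Fin.last N := fun he => hlast (he ▸ hmem)
      have hlt : bfn S₀ hlast t < bfn S₀ hlast (t + 1) := by
        rw [bfn_lt_iff]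
        rw [Fin.lt_add_one_iff]
        exact Fin.lt_last_iff_ne_last.mpr ht
      have hle : bfn S₀ hlast (t+1) ≤ Pp (bfn S₀ hlast (t+1)) :=
        lrmax_le_self_apply Pp _ (W_lemma hfix hsub _ (bfn_mem hlast (t+1)))
      constructor
      · intro _
        exact ⟨hne, lrmax_le_self_apply Pp _ (mem_lrmaxF.mp (hsub hmem))⟩
      · intro _
        rw [pi_bfn_apply]
        exact le_of_lt (lt_of_lt_of_le hlt hle)
  · have hne : x ≠ Fin.last N := fun he => hx (he ▸ mem_insert_self _ _)
    rw [pi_not_mem_apply hlast hx]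
    constructor
    · intro h; exact ⟨hne, h⟩
    · rintro ⟨_, h⟩; exact h

include hfix hS hsub in
theorem KEY2 : lrmaxF (Pp * sigC S₀ hlast) =
    S₀ ∪ (lrmaxF Pp).filter (fun x => ∀ s ∈ S₀, x ≤ s) := by
  ext x
  rw [mem_lrmaxF, mem_union, mem_filter]
  by_cases hx : x ∈ chA S₀
  · obtain ⟨t, rfl⟩ := bfn_surj hlast hx
    by_cases ht : t = Fin.last _
    · subst ht
      rw [bfn_last]
      constructor
      · intro h
        exfalso
        set t₀ : Fin (S₀.card + 1) := Fin.last _ - 1 with ht₀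
        have ht₀ne : t₀ ≠ Fin.last _ := by
          intro he
          have h2 : t₀ + 1 = Fin.last _ + 1 := by rw [he]
          rw [ht₀, sub_add_cancel, Fin.last_add_one] at h2
          exact zero_ne_last_idx hS h2.symm
        have hlt : bfn S₀ hlast t₀ < Fin.last N := by
          have := (bfn_strictMono hlast) (Fin.lt_last_iff_ne_last.mpr ht₀ne)
          rwa [bfn_last] at this
        have happ : (Pp * sigC S₀ hlast) (bfn S₀ hlast t₀) = Fin.last N := by
          rw [pi_bfn_apply, ht₀, sub_add_cancel, bfn_last, hfix]
        have hcon := h _ hlt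
        rw [happ] at hcon
        exact absurd hcon (Fin.le_last _).not_gt
      · rintro (h | ⟨_, h⟩)
        · exact absurd h hlast
        · obtain ⟨s, hs⟩ := hS
          have h2 := h s hs
          have hslt : s < Fin.last N := Fin.lt_last_iff_ne_last.mpr (fun he => hlast (he ▸ hs))
          exact absurd h2 hslt.not_ge
    · have hmem := bfn_mem_S₀ hlast ht
      have htlt : t < t + 1 := Fin.lt_add_one_iff.mpr (Fin.lt_last_iff_ne_last.mpr ht)
      constructor
      · intro _; exact Or.inl hmem
      · intro _ y hy
        rw [pi_bfn_apply]
        by_cases hyA : y ∈ chA S₀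
        · obtain ⟨r, rfl⟩ := bfn_surj hlast hyA
          have hrt : r < t := (bfn_lt_iff hlast).mp hy
          rw [pi_bfn_apply]
          apply W_lemma hfix hsub _ (bfn_mem hlast (t+1))
          exact (bfn_strictMono hlast) (fin_add_one_lt_add_one hrt ht)
        · rw [pi_not_mem_apply hlast hyA]
          apply W_lemma hfix hsub _ (bfn_mem hlast (t+1))
          exact lt_trans hy ((bfn_strictMono hlast) htlt)
  · have hxS : x ∉ S₀ := fun h => hx (mem_insert_of_mem h)
    have hxlast : x ≠ Fin.last N := fun h => hx (h ▸ mem_insert_self _ _)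
    have hval : (Pp * sigC S₀ hlast) x = Pp x := pi_not_mem_apply hlast hx
    by_cases hbelow : ∀ s ∈ S₀, x ≤ s
    · have hyfree : ∀ y, y < x → y ∉ chA S₀ := by
        intro y hy hyA
        rw [chA, mem_insert] at hyA
        rcases hyA with rfl | hyS
        · exact absurd (lt_of_lt_of_le hy (Fin.le_last x)) (lt_irrefl _)
        · exact absurd hy (hbelow y hyS).not_gt
      constructor
      · intro h
        refine Or.inr ⟨mem_lrmaxF.mpr (fun y hy => ?_), hbelow⟩
        have h2 := h y hy
        rwa [pi_not_mem_apply hlast (hyfree y hy), hval] at h2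
      · rintro (h | ⟨h, _⟩)
        · exact absurd h hxS
        · intro y hy
          rw [hval, pi_not_mem_apply hlast (hyfree y hy)]
          exact mem_lrmaxF.mp h y hy
    · push_neg at hbelow
      obtain ⟨s₁, hs₁S, hs₁lt⟩ := hbelow
      constructor
      · intro h
        exfalso
        set F := S₀.filter (· < x) with hF
        have hFne : F.Nonempty := ⟨s₁, by rw [hF, mem_filter]; exact ⟨hs₁S, hs₁lt⟩⟩
        have hsmF : F.max' hFne ∈ F := F.max'_mem hFne
        set sm := F.max' hFne with hsm
        rw [hF, mem_filter] at hsmF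
        obtain ⟨t, htv⟩ := bfn_surj hlast (mem_insert_of_mem hsmF.1)
        have htne : t ≠ Fin.last _ := by
          intro he; rw [he, bfn_last] at htv
          exact hlast (htv ▸ hsmF.1)
        have hval2 : (Pp * sigC S₀ hlast) sm = Pp (bfn S₀ hlast (t+1)) := by
          rw [← htv, pi_bfn_apply]
        have hgt : x < bfn S₀ hlast (t+1) := by
          rcases (mem_insert.mp (bfn_mem hlast (t+1))) with hl | hS0
          · rw [hl]; exact Fin.lt_last_iff_ne_last.mpr hxlast
          · by_contra hle
            push_neg at hle
            have hne : bfn S₀ hlast (t+1) ≠ x := fun he => hx (he ▸ mem_insert_of_mem hS0)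
            have hltx : bfn S₀ hlast (t+1) < x := lt_of_le_of_ne hle hne
            have hmemF : bfn S₀ hlast (t+1) ∈ F := by rw [hF, mem_filter]; exact ⟨hS0, hltx⟩
            have hle2 := F.le_max' _ hmemF
            rw [← hsm, ← htv] at hle2
            have h3 : t + 1 ≤ t := (bfn_strictMono hlast).le_iff_le.mp hle2
            have htlt : t < t + 1 := Fin.lt_add_one_iff.mpr (Fin.lt_last_iff_ne_last.mpr htne)
            exact absurd htlt h3.not_gt
        have hcon := h sm hsmF.2
        rw [hval2, hval] at hcon
        have h4 := W_lemma hfix hsub _ (bfn_mem hlast (t+1)) x hgt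
        exact absurd hcon (lt_asymm h4)
      · rintro (h | ⟨_, h⟩)
        · exact absurd h hxS
        · exact absurd (h s₁ hs₁S) (not_le.mpr hs₁lt)

include hfix hS hsub in
theorem KEY3 : univ.filter (fun r => (∀ j, j < r → (Pp * sigC S₀ hlast) j < (Pp * sigC S₀ hlast) r)
      ∧ (Pp * sigC S₀ hlast) (Fin.last N) < (Pp * sigC S₀ hlast) r) = S₀ := by
  ext r
  rw [mem_filter]
  constructor
  · rintro ⟨_, hlr, hgt⟩
    have hmem : r ∈ lrmaxF (Pp * sigC S₀ hlast) := mem_lrmaxF.mpr hlr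
    rw [KEY2 hfix hS hlast hsub, mem_union, mem_filter] at hmem
    rcases hmem with h | ⟨_, hle⟩
    · exact h
    · by_contra hrS
      have hrlt : r < bfn S₀ hlast 0 := by
        have h1 := hle _ (bfn_zero_mem hS hlast)
        exact lt_of_le_of_ne h1 (fun he => hrS (he ▸ bfn_zero_mem hS hlast))
      have hrA : r ∉ chA S₀ := by
        intro hrA
        rcases mem_insert.mp hrA with rfl | hrS'
        · exact absurd hrlt (not_lt.mpr (Fin.le_last _))
        · exact hrS hrS'
      rw [pi_not_mem_apply hlast hrA, pi_last_apply] at hgt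
      have := W_lemma hfix hsub _ (mem_insert_of_mem (bfn_zero_mem hS hlast)) r hrlt
      exact absurd hgt (lt_asymm this)
  · intro hrS
    refine ⟨mem_univ r, ?_, ?_⟩
    · have : r ∈ lrmaxF (Pp * sigC S₀ hlast) := by
        rw [KEY2 hfix hS hlast hsub, mem_union]; exact Or.inl hrS
      exact mem_lrmaxF.mp this
    · obtain ⟨t, htv⟩ := bfn_surj hlast (mem_insert_of_mem hrS)
      have htne : t ≠ Fin.last _ := by
        intro he; rw [he, bfn_last] at htv
        exact hlast (htv ▸ hrS)
      rw [← htv, pi_bfn_apply, pi_last_apply]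
      apply W_lemma hfix hsub _ (bfn_mem hlast (t+1))
      apply (bfn_strictMono hlast)
      exact Fin.pos_iff_ne_zero.mpr (fin_add_one_ne_zero htne)

end Forward

/-! ### backward direction -/

lemma exists_argmax {M : ℕ} (π : Equiv.Perm (Fin M)) (r : Fin M) :
    ∃ b, b ≤ r ∧ π r ≤ π b ∧ ∀ j, j < b → π j < π b := by
  obtain ⟨b, hb, hmax⟩ := (Finset.Iic r).exists_max_image π ⟨r, mem_Iic.mpr le_rfl⟩
  rw [mem_Iic] at hb
  refine ⟨b, hb, hmax r (mem_Iic.mpr le_rfl), fun j hj => ?_⟩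
  have hle := hmax j (mem_Iic.mpr (le_trans hj.le hb))
  exact lt_of_le_of_ne hle (fun he => (ne_of_lt hj) (π.injective he))

section Backward
variable {N : ℕ} (π : Equiv.Perm (Fin (N+1)))

def S0π : Finset (Fin (N+1)) :=
  univ.filter (fun r => (∀ j, j < r → π j < π r) ∧ π (Fin.last N) < π r)

lemma B2 : Fin.last N ∉ S0π π := by
  simp only [S0π, mem_filter, mem_univ, true_and, not_and]
  intro _
  exact lt_irrefl _

variable (hπ : π (Fin.last N) ≠ Fin.last N)

include hπ in
lemma Binvmem : π⁻¹ (Fin.last N) ∈ S0π π := by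
  simp only [S0π, mem_filter, mem_univ, true_and]
  constructor
  · intro j hj
    rw [Equiv.Perm.eq_inv_iff_eq.mp rfl]
    refine Fin.lt_last_iff_ne_last.mpr (fun he => ?_)
    have : j = π⁻¹ (Fin.last N) := by
      rw [← he, Equiv.Perm.inv_eq_iff_eq.mpr rfl]
    exact (ne_of_lt hj) this
  · rw [Equiv.Perm.eq_inv_iff_eq.mp rfl]
    exact Fin.lt_last_iff_ne_last.mpr hπ

include hπ in
lemma B1 : (S0π π).Nonempty := ⟨_, Binvmem π hπ⟩

include hπ in
lemma Bmax : ∀ r ∈ S0π π, r ≤ π⁻¹ (Fin.last N) := by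
  intro r hr
  by_contra hlt
  push_neg at hlt
  simp only [S0π, mem_filter, mem_univ, true_and] at hr
  have := hr.1 _ hlt
  rw [Equiv.Perm.eq_inv_iff_eq.mp rfl] at this
  exact absurd this (Fin.le_last _).not_gt

lemma Cl1 : ∀ y, y < Fin.last N → (∀ s ∈ S0π π, y < s) → π y < π (Fin.last N) := by
  intro y hy hall
  by_contra hle
  push_neg at hle
  have hne : π (Fin.last N) ≠ π y := fun he => (ne_of_lt hy) (π.injective he).symm
  have hlt : π (Fin.last N) < π y := lt_of_le_of_ne hle hne
  obtain ⟨b, hby, hvb, hblr⟩ := exists_argmax π y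
  have hbS : b ∈ S0π π := by
    simp only [S0π, mem_filter, mem_univ, true_and]
    exact ⟨hblr, lt_of_lt_of_le hlt hvb⟩
  exact absurd (hall b hbS) (not_lt.mpr hby)

lemma chainMono : ∀ s t, s ∈ S0π π → t ∈ S0π π → s < t → π s < π t := by
  intro s t _ ht hst
  simp only [S0π, mem_filter, mem_univ, true_and] at ht
  exact ht.1 s hst

lemma Cl2 (w : Fin (N+1)) (hw : w ∈ S0π π) (r : Fin (N+1))
    (hr : ∀ u ∈ S0π π, u ≤ r → u ≤ w) (hrw : r ≠ w) : π r < π w := by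
  obtain ⟨b, hbr, hvb, hblr⟩ := exists_argmax π r
  have hwlast := hw
  simp only [S0π, mem_filter, mem_univ, true_and] at hwlast
  by_cases hb : π (Fin.last N) < π b
  · have hbS : b ∈ S0π π := by
      simp only [S0π, mem_filter, mem_univ, true_and]
      exact ⟨hblr, hb⟩
    have hbw : b ≤ w := hr b hbS hbr
    have hvw : π b ≤ π w := by
      rcases lt_or_eq_of_le hbw with hlt | rfl
      · exact (chainMono π b w hbS hw hlt).le
      · exact le_rfl
    have hle := le_trans hvb hvw
    exact lt_of_le_of_ne hle (fun he => hrw (π.injective he))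
  · push_neg at hb
    exact lt_of_le_of_lt (le_trans hvb hb) hwlast.2

include hπ in
lemma B3 : (π * (sigC (S0π π) (B2 π))⁻¹) (Fin.last N) = Fin.last N := by
  rw [Equiv.Perm.mul_apply, sigC_inv_last]
  have hcard : 0 < (S0π π).card := card_pos.mpr (B1 π hπ)
  have hlastne : (Fin.last (S0π π).card : Fin ((S0π π).card + 1)) ≠ 0 := by
    intro he
    have := congrArg Fin.val he
    simp only [Fin.val_last, Fin.val_zero] at this
    omega
  have ht₀ne : (Fin.last (S0π π).card - 1 : Fin ((S0π π).card + 1)) ≠ Fin.last _ :=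
    fin_sub_one_ne_last hlastne
  have hmem : bfn (S0π π) (B2 π) (Fin.last _ - 1) ∈ S0π π := bfn_mem_S₀ (B2 π) ht₀ne
  obtain ⟨s, hsv⟩ := bfn_surj (B2 π) (mem_insert_of_mem (Binvmem π hπ))
  have hsne : s ≠ Fin.last _ := by
    intro he
    rw [he, bfn_last] at hsv
    apply hπ
    nth_rewrite 1 [hsv]
    rw [Equiv.Perm.eq_inv_iff_eq.mp rfl]
  have hs_le : s ≤ Fin.last _ - 1 := by
    have : s < (Fin.last _ - 1) + 1 := by
      rw [sub_add_cancel]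
      exact Fin.lt_last_iff_ne_last.mpr hsne
    exact (fin_lt_add_one_iff_le ht₀ne).mp this
  have h_le2 : bfn (S0π π) (B2 π) (Fin.last _ - 1) ≤ π⁻¹ (Fin.last N) :=
    Bmax π hπ _ hmem
  rw [← hsv] at h_le2
  have : Fin.last _ - 1 ≤ s := (bfn_strictMono (B2 π)).le_iff_le.mp h_le2
  have hse : s = Fin.last _ - 1 := le_antisymm hs_le this
  rw [← hse, hsv, Equiv.Perm.eq_inv_iff_eq.mp rfl]

include hπ in
lemma B4 : S0π π ⊆ lrmaxF (π * (sigC (S0π π) (B2 π))⁻¹) := by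
  intro x hx
  rw [mem_lrmaxF]
  obtain ⟨t, rfl⟩ := bfn_surj (B2 π) (mem_insert_of_mem hx)
  have htne : t ≠ Fin.last _ := by
    intro he; rw [he, bfn_last] at hx
    exact absurd hx (B2 π)
  intro y hy
  have hylast : y ≠ Fin.last N := by
    intro he
    rw [he] at hy
    exact absurd (lt_of_lt_of_le hy (Fin.le_last _)) (lt_irrefl _)
  by_cases ht0 : t = 0
  · subst ht0
    have hyA : y ∉ chA (S0π π) := by
      intro hyA
      rcases mem_insert.mp hyA with rfl | hyS
      · exact hylast rfl
      · obtain ⟨s, rfl⟩ := bfn_surj (B2 π) (mem_insert_of_mem hyS)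
        have := (bfn_lt_iff (B2 π)).mp hy
        exact absurd this (Fin.zero_le s).not_gt
    rw [Equiv.Perm.mul_apply, Equiv.Perm.mul_apply, sigC_inv_not_mem (B2 π) hyA]
    have h0 : (sigC (S0π π) (B2 π))⁻¹ (bfn (S0π π) (B2 π) 0) = Fin.last N := by
      rw [← sigC_last (B2 π), Equiv.Perm.inv_eq_iff_eq.mpr rfl]
    rw [h0]
    apply Cl1 π y (Fin.lt_last_iff_ne_last.mpr hylast)
    intro s hs
    exact lt_of_lt_of_le hy (bfn_zero_min (B2 π) s hs)
  · have ht₁ne : t - 1 ≠ Fin.last _ := fin_sub_one_ne_last ht0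
    have ht₁mem : bfn (S0π π) (B2 π) (t-1) ∈ S0π π := bfn_mem_S₀ (B2 π) ht₁ne
    have hxval : (π * (sigC (S0π π) (B2 π))⁻¹) (bfn (S0π π) (B2 π) t) =
        π (bfn (S0π π) (B2 π) (t-1)) := by
      rw [Equiv.Perm.mul_apply]
      nth_rewrite 1 [show t = (t-1) + 1 from (sub_add_cancel t 1).symm]
      rw [sigC_inv_bfn]
    rw [hxval]
    by_cases hyA : y ∈ chA (S0π π)
    · rcases mem_insert.mp hyA with rfl | hyS
      · exact absurd rfl hylast
      · obtain ⟨s, rfl⟩ := bfn_surj (B2 π) (mem_insert_of_mem hyS)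
        have hst : s < t := (bfn_lt_iff (B2 π)).mp hy
        by_cases hs0 : s = 0
        · subst hs0
          have h0 : (π * (sigC (S0π π) (B2 π))⁻¹) (bfn (S0π π) (B2 π) 0) = π (Fin.last N) := by
            rw [Equiv.Perm.mul_apply, ← sigC_last (B2 π), Equiv.Perm.inv_eq_iff_eq.mpr rfl]
          rw [h0]
          have := ht₁mem
          simp only [S0π, mem_filter, mem_univ, true_and] at this
          exact this.2
        · have hval : (π * (sigC (S0π π) (B2 π))⁻¹) (bfn (S0π π) (B2 π) s) =
              π (bfn (S0π π) (B2 π) (s-1)) := by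
            rw [Equiv.Perm.mul_apply]
            nth_rewrite 1 [show s = (s-1) + 1 from (sub_add_cancel s 1).symm]
            rw [sigC_inv_bfn]
          rw [hval]
          have hs₁mem : bfn (S0π π) (B2 π) (s-1) ∈ S0π π :=
            bfn_mem_S₀ (B2 π) (fin_sub_one_ne_last hs0)
          apply chainMono π _ _ hs₁mem ht₁mem
          exact (bfn_strictMono (B2 π)) (fin_sub_one_lt_sub_one hst hs0)
    · rw [Equiv.Perm.mul_apply, sigC_inv_not_mem (B2 π) hyA]
      apply Cl2 π _ ht₁mem
      · intro u hu huy
        obtain ⟨s, rfl⟩ := bfn_surj (B2 π) (mem_insert_of_mem hu)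
        have hst : s < t := (bfn_lt_iff (B2 π)).mp (lt_of_le_of_lt huy hy)
        apply (bfn_strictMono (B2 π)).monotone
        have : s < (t - 1) + 1 := by rw [sub_add_cancel]; exact hst
        exact (fin_lt_add_one_iff_le ht₁ne).mp this
      · intro he
        rw [he] at hyA
        exact hyA (mem_insert_of_mem ht₁mem)
end Backward

/-! ### assembling the permutation decomposition -/

lemma mapS_not_last (S : Finset (Fin n)) : Fin.last n ∉ S.map csEmb := by
  rw [mem_map]
  rintro ⟨i, _, he⟩
  exact cs_ne_last' i he

lemma sigC_congr {N : ℕ} {S₁ S₂ : Finset (Fin (N+1))} (h : S₁ = S₂)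
    (h1 : Fin.last N ∉ S₁) : sigC S₁ h1 = sigC S₂ (h ▸ h1) := by
  subst h; rfl

lemma prestrict_congr {π₁ π₂ : Equiv.Perm (Fin (n+1))} (h : π₁ = π₂)
    (h1 : π₁ (Fin.last n) = Fin.last n) : prestrict π₁ h1 = prestrict π₂ (h ▸ h1) := by
  subst h; rfl

def pullb (S₀ : Finset (Fin (n+1))) : Finset (Fin n) :=
  univ.filter (fun i => i.castSucc ∈ S₀)

lemma pullb_map {S₀ : Finset (Fin (n+1))} (h : Fin.last n ∉ S₀) :
    (pullb S₀).map csEmb = S₀ := by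
  ext x
  rw [mem_map]
  constructor
  · rintro ⟨i, hi, rfl⟩
    simpa [pullb, csEmb] using hi
  · intro hx
    have hne : x ≠ Fin.last n := fun he => h (he ▸ hx)
    exact ⟨x.castPred hne, by simp [pullb, Fin.castSucc_castPred, hx], by
      simp [csEmb, Fin.castSucc_castPred]⟩

lemma map_pullb (S : Finset (Fin n)) : pullb (S.map csEmb) = S := by
  ext i
  simp [pullb, csEmb, Fin.castSucc_injective n |>.eq_iff]

lemma pullb_nonempty {S₀ : Finset (Fin (n+1))} (hne : S₀.Nonempty) (h : Fin.last n ∉ S₀) :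
    (pullb S₀).Nonempty := by
  obtain ⟨x, hx⟩ := hne
  have hxne : x ≠ Fin.last n := fun he => h (he ▸ hx)
  exact ⟨x.castPred hxne, by simp [pullb, Fin.castSucc_castPred, hx]⟩

lemma lrmax_prestrict (π : Equiv.Perm (Fin (n+1))) (h : π (Fin.last n) = Fin.last n)
    (i : Fin n) : i ∈ lrmaxF (prestrict π h) ↔ i.castSucc ∈ lrmaxF π := by
  conv_rhs => rw [← pext_prestrict π h]
  exact (lrmax_pext_cs _ i).symm

lemma map_subset_lrmax_pext {ρ : Equiv.Perm (Fin n)} {S : Finset (Fin n)}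
    (hsub : S ⊆ lrmaxF ρ) : S.map csEmb ⊆ lrmaxF (pext ρ) := by
  intro x hx
  rw [mem_map] at hx
  obtain ⟨i, hi, rfl⟩ := hx
  exact (lrmax_pext_cs ρ i).mpr (hsub hi)

def permD : Equiv.Perm (Fin (n+1)) ≃ ExtD (Equiv.Perm (Fin n)) lrmaxF where
  toFun π := if h : π (Fin.last n) = Fin.last n then Sum.inl (prestrict π h)
    else Sum.inr ⟨(prestrict (π * (sigC (S0π π) (B2 π))⁻¹) (B3 π h), pullb (S0π π)),
      pullb_nonempty (B1 π h) (B2 π), by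
        intro i hi
        rw [lrmax_prestrict]
        simp only [pullb, mem_filter, mem_univ, true_and] at hi
        exact B4 π h hi⟩
  invFun := Sum.elim pext (fun p => pext p.1.1 * sigC (p.1.2.map csEmb) (mapS_not_last _))
  left_inv π := by
    dsimp only
    by_cases h : π (Fin.last n) = Fin.last n
    · erw [dif_pos h, Sum.elim_inl, pext_prestrict]
    · erw [dif_neg h, Sum.elim_inr]
      have hmap : (pullb (S0π π)).map csEmb = S0π π := pullb_map (B2 π)
      rw [sigC_congr hmap, pext_prestrict]
      exact inv_mul_cancel_right π _
  right_inv p := by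
    dsimp only
    rcases p with ρ | ⟨⟨ρ, S⟩, hne, hsub⟩
    · erw [Sum.elim_inl, dif_pos (pext_last ρ), prestrict_pext]
    · rw [Sum.elim_inr]
      have hS' : (S.map csEmb).Nonempty := hne.map
      have hsub' : S.map csEmb ⊆ lrmaxF (pext ρ) := map_subset_lrmax_pext hsub
      have hπlast := pi_last_ne (pext_last ρ) hS' (mapS_not_last S)
        (Pp := pext ρ) (S₀ := S.map csEmb)
      erw [dif_neg hπlast]
      have hS0 : S0π (pext ρ * sigC (S.map csEmb) (mapS_not_last S)) = S.map csEmb := by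
        rw [S0π]
        exact KEY3 (pext_last ρ) hS' (mapS_not_last S) hsub'
      congr 1
      apply Subtype.ext
      apply Prod.ext
      · dsimp only
        have h1 : (pext ρ * sigC (S.map csEmb) (mapS_not_last S)) *
            (sigC (S0π (pext ρ * sigC (S.map csEmb) (mapS_not_last S)))
              (B2 _))⁻¹ = pext ρ := by
          rw [sigC_congr hS0]
          exact mul_inv_cancel_right _ _
        rw [prestrict_congr h1, prestrict_pext]
      · dsimp only
        rw [hS0, map_pullb]

/-! ### statistics of the decomposition -/

theorem permD_symm_inl (ρ : Equiv.Perm (Fin n)) : permD.symm (Sum.inl ρ) = pext ρ := rfl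

theorem permD_symm_inr (p) : (permD (n := n)).symm (Sum.inr p)
    = pext p.1.1 * sigC (p.1.2.map csEmb) (mapS_not_last _) := rfl

lemma filter_le_transfer (ρ : Equiv.Perm (Fin n)) (S : Finset (Fin n)) (hne : S.Nonempty) :
    (lrmaxF (pext ρ)).filter (fun x => ∀ s ∈ S.map csEmb, x ≤ s) =
      ((lrmaxF ρ).filter (fun i => ∀ s ∈ S, i ≤ s)).map csEmb := by
  ext x
  induction x using Fin.lastCases with
  | last =>
    rw [mem_filter, mem_map]
    constructor
    · rintro ⟨_, hall⟩
      obtain ⟨s, hs⟩ := hne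
      have := hall s.castSucc (mem_map_of_mem _ hs)
      exact absurd (le_antisymm this (Fin.le_last _)).symm (cs_ne_last' s)
    · rintro ⟨i, _, he⟩
      exact absurd he (fun h => cs_ne_last' i h)
  | cast i =>
    rw [mem_filter, lrmax_pext_cs]
    constructor
    · rintro ⟨h1, h2⟩
      rw [mem_map]
      refine ⟨i, mem_filter.mpr ⟨h1, fun s hs => ?_⟩, rfl⟩
      have := h2 s.castSucc (mem_map_of_mem _ hs)
      exact Fin.castSucc_le_castSucc_iff.mp this
    · intro h
      rw [mem_map] at h
      obtain ⟨j, hj, he⟩ := h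
      have hji : j = i := by simpa [csEmb] using he
      subst hji
      rw [mem_filter] at hj
      refine ⟨hj.1, fun s hs => ?_⟩
      rw [mem_map] at hs
      obtain ⟨u, hu, rfl⟩ := hs
      exact Fin.castSucc_le_castSucc_iff.mpr (hj.2 u hu)

theorem permD_inr_stats (p : {p : Equiv.Perm (Fin n) × Finset (Fin n) //
      p.2.Nonempty ∧ p.2 ⊆ lrmaxF p.1}) (π : Equiv.Perm (Fin (n+1)))
    (h : permD.symm (Sum.inr p) = π) :
    wexcF π = (wexcF p.1.1).map csEmb ∧
    lrmaxF π = (gset (lrmaxF p.1.1) p.1.2).map csEmb := by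
  obtain ⟨⟨ρ, S⟩, hne, hsub⟩ := p
  subst h
  rw [permD_symm_inr]
  dsimp only
  have hS' : (S.map csEmb).Nonempty := hne.map
  have hsub' : S.map csEmb ⊆ lrmaxF (pext ρ) := map_subset_lrmax_pext hsub
  constructor
  · rw [KEY1 (pext_last ρ) hS' (mapS_not_last S) hsub', wexcF_pext,
      Finset.erase_insert (mapS_not_last (wexcF ρ))]
  · rw [KEY2 (pext_last ρ) hS' (mapS_not_last S) hsub', gset, Finset.map_union,
      filter_le_transfer ρ S hne]

theorem permD_inl_stats (π : Equiv.Perm (Fin (n+1))) (π' : Equiv.Perm (Fin n))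
    (h : permD.symm (Sum.inl π') = π) :
    wexcF π = insert (Fin.last n) ((wexcF π').map csEmb) ∧
    lrmaxF π = insert (Fin.last n) ((lrmaxF π').map csEmb) := by
  rw [permD_symm_inl] at h
  subst h
  exact ⟨wexcF_pext π', lrmaxF_pext π'⟩

def extCongr {X Y : Type*} (f : X → Finset (Fin n)) (g : Y → Finset (Fin n))
    (Φ : X ≃ Y) (h : ∀ x, f x = g (Φ x)) : ExtD X f ≃ ExtD Y g :=
  Equiv.sumCongr Φ (Equiv.subtypeEquiv (Equiv.prodCongr Φ (Equiv.refl _))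
    (by intro p; rw [show g ((Equiv.prodCongr Φ (Equiv.refl _)) p).1 = f p.1 from (h p.1).symm]
        rfl))

theorem key : ∀ n, ∃ Φ : PermTableau n ≃ Equiv.Perm (Fin n),
    ∀ T, rowF T = wexcF (Φ T) ∧ unresF T = lrmaxF (Φ T) := by
  intro n
  induction n with
  | zero =>
    refine ⟨Equiv.ofUnique _ _, fun T => ⟨?_, ?_⟩⟩ <;>
      · apply Finset.eq_of_subset_of_card_le <;> simp [Finset.eq_empty_of_isEmpty]
  | succ n ih =>
    obtain ⟨Φ, hΦ⟩ := ih
    refine ⟨tabD.trans ((extCongr unresF lrmaxF Φ (fun T => (hΦ T).2)).trans permD.symm), ?_⟩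
    intro T
    rcases hd : tabD T with T' | p
    · have h1 := tabD_inl_stats T T' hd
      have h2 := permD_inl_stats _ (Φ T') (rfl)
      have he : (tabD.trans ((extCongr unresF lrmaxF Φ (fun T => (hΦ T).2)).trans permD.symm)) T
          = permD.symm (Sum.inl (Φ T')) := by
        simp [hd, extCongr, Equiv.trans_apply]
        rfl
      rw [he]
      constructor
      · rw [h1.1, (permD_inl_stats _ (Φ T') rfl).1, (hΦ T').1]
      · rw [h1.2, (permD_inl_stats _ (Φ T') rfl).2, (hΦ T').2]
    · have h1 := tabD_inr_stats T p hd
      set q : {p : Equiv.Perm (Fin n) × Finset (Fin n) // p.2.Nonempty ∧ p.2 ⊆ lrmaxF p.1} :=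
        ⟨(Φ p.1.1, p.1.2), by
          refine ⟨p.2.1, ?_⟩; rw [← (hΦ p.1.1).2]; exact p.2.2⟩ with hq
      have he : (tabD.trans ((extCongr unresF lrmaxF Φ (fun T => (hΦ T).2)).trans permD.symm)) T
          = permD.symm (Sum.inr q) := by
        simp [hd, extCongr, Equiv.trans_apply, hq]
        rfl
      rw [he]
      have h2 := permD_inr_stats q _ rfl
      constructor
      · rw [h1.1, h2.1]; simp only [hq]; rw [(hΦ p.1.1).1]
      · rw [h1.2, h2.2]; simp only [hq]; rw [(hΦ p.1.1).2]

/-- The number of permutation tableaux of length `n` with exactly `k` rows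
equals the number of permutations of `[n]` with exactly `k` weak excedances. -/
theorem tableaux_rows_eq_perms_weakExcedances (n k : ℕ) (hn : 1 ≤ n) (hk : 1 ≤ k)
    (hkn : k ≤ n) :
    Nat.card {T : PermTableau n // T.numRows = k} =
      Nat.card {π : Equiv.Perm (Fin n) // {i : Fin n | i ≤ π i}.ncard = k} := by
  obtain ⟨Φ, hΦ⟩ := key n
  apply Nat.card_congr
  refine Equiv.subtypeEquiv Φ (fun T => ?_)
  have h1 : T.numRows = (rowF T).card := by
    rw [PermTableau.numRows, show {i : Fin n | T.isRow i = true} = ↑(rowF T) by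
      ext i; simp [rowF], Set.ncard_coe_finset]
  have h2 : {i : Fin n | i ≤ Φ T i}.ncard = (wexcF (Φ T)).card := by
    rw [show {i : Fin n | i ≤ Φ T i} = ↑(wexcF (Φ T)) by ext i; simp [wexcF],
      Set.ncard_coe_finset]
  rw [h1, h2, (hΦ T).1]
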